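/- Let w ∈ S_n contain a 132 pattern, with p the largest index t admitting i < t < j with w(i) < w(j) < w(t), and q the largest index j > p with w(j) < w(p) and ∃ i < p, w(i) < w(j). Set u = w t_{p,q}. Then the set I(u,p) = { i < p : ℓ(u t_{i,p}) = ℓ(u) + 1 } is nonempty. -/

import Mathlib

/-- The number of inversions of a permutation of `Fin n`. -/
def numInv {n : ℕ} (w : Equiv.Perm (Fin n)) : ℕ :=
  (Finset.univ.filter (fun x : Fin n × Fin n => x.1 < x.2 ∧ w x.2 < w x.1)).card

lemma key_numInv {n : ℕ} (v : Equiv.Perm (Fin n)) (i p : Fin n) (hip : i < p)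
    (hvi : v i < v p)
    (hno : ∀ k : Fin n, i < k → k < p → ¬(v i < v k ∧ v k < v p)) :
    numInv (v * Equiv.swap i p) = numInv v + 1 := by
  classical
  set σ : Equiv.Perm (Fin n) := Equiv.swap i p with hσ
  have hσi : σ i = p := Equiv.swap_apply_left i p
  have hσp : σ p = i := Equiv.swap_apply_right i p
  have hσo : ∀ a : Fin n, a ≠ i → a ≠ p → σ a = a :=
    fun a h1 h2 => Equiv.swap_apply_of_ne_of_ne h1 h2
  have hσσ : ∀ a : Fin n, σ (σ a) = a := fun a => Equiv.swap_apply_self i p a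
  have hinj : Function.Injective v := v.injective
  have hinjσ : Function.Injective σ := σ.injective
  -- structure of "flipped" pairs
  have hF : ∀ a b : Fin n, a < b → σ b < σ a →
      (a = i ∧ b = p) ∨ (a = i ∧ i < b ∧ b < p) ∨ (b = p ∧ i < a ∧ a < p) := by
    intro a b hab hflip
    by_cases hai : a = i
    · by_cases hbp : b = p
      · exact Or.inl ⟨hai, hbp⟩
      · have hbi : b ≠ i := by rintro rfl; subst hai; exact lt_irrefl _ hab
        have hσb : σ b = b := hσo b hbi hbp
        subst hai
        rw [hσb, hσi] at hflip
        exact Or.inr (Or.inl ⟨rfl, hab, hflip⟩)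
    · by_cases hap : a = p
      · exfalso
        have hpb : p < b := hap ▸ hab
        have hbi : b ≠ i := ne_of_gt (hip.trans hpb)
        have hbp : b ≠ p := ne_of_gt hpb
        rw [hap, hσo b hbi hbp, hσp] at hflip
        exact absurd (hflip.trans (hip.trans hpb)) (lt_irrefl b)
      · have hσa : σ a = a := hσo a hai hap
        by_cases hbi : b = i
        · exfalso
          rw [hbi, hσa, hσi] at hflip
          have hai' : a < i := hbi ▸ hab
          exact absurd ((hflip.trans hai').trans hip) (lt_irrefl p)
        · by_cases hbp : b = p
          · rw [hbp, hσa, hσp] at hflip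
            have hap' : a < p := hbp ▸ hab
            exact Or.inr (Or.inr ⟨hbp, hflip, hap'⟩)
          · rw [hσa, hσo b hbi hbp] at hflip
            exact absurd (hab.trans hflip) (lt_irrefl a)
  -- dichotomy for intermediate k
  have hdi : ∀ k : Fin n, i < k → k < p → (v k < v i ↔ v k < v p) := by
    intro k h1 h2
    constructor
    · intro h; exact h.trans hvi
    · intro h
      rcases lt_trichotomy (v k) (v i) with h' | h' | h'
      · exact h'
      · exact absurd (hinj h') (ne_of_gt h1)
      · exact absurd ⟨h', h⟩ (hno k h1 h2)
  have hdi' : ∀ k : Fin n, i < k → k < p → (v p < v k ↔ v i < v k) := by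
    intro k h1 h2
    constructor
    · intro h; exact hvi.trans h
    · intro h
      rcases lt_trichotomy (v p) (v k) with h' | h' | h'
      · exact h'
      · exact absurd (hinj h') (ne_of_gt h2)
      · exact absurd ⟨h, h'⟩ (hno k h1 h2)
  set S' : Finset (Fin n × Fin n) :=
    Finset.univ.filter (fun x : Fin n × Fin n => x.1 < x.2 ∧ (v * σ) x.2 < (v * σ) x.1) with hS'
  set S : Finset (Fin n × Fin n) :=
    Finset.univ.filter (fun x : Fin n × Fin n => x.1 < x.2 ∧ v x.2 < v x.1) with hS
  have hipS : (i, p) ∉ S := by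
    simp only [hS, Finset.mem_filter]
    rintro ⟨-, -, h⟩
    exact absurd (h.trans hvi) (lt_irrefl _)
  set T : Finset (Fin n × Fin n) := insert (i, p) S with hT
  set Φ : Fin n × Fin n → Fin n × Fin n :=
    fun x => if σ x.1 < σ x.2 then (σ x.1, σ x.2) else x with hΦ
  have hΦΦ : ∀ x : Fin n × Fin n, x.1 < x.2 → Φ (Φ x) = x := by
    intro x hx
    by_cases h : σ x.1 < σ x.2
    · simp only [hΦ]
      rw [if_pos h]
      simp only [hσσ]
      rw [if_pos hx]
    · simp only [hΦ]
      rw [if_neg h, if_neg h]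
  have memS' : ∀ x : Fin n × Fin n, x ∈ S' ↔ x.1 < x.2 ∧ v (σ x.2) < v (σ x.1) := by
    intro x; rw [hS', Finset.mem_filter]; simp [Equiv.Perm.mul_apply]
  have memS : ∀ x : Fin n × Fin n, x ∈ S ↔ x.1 < x.2 ∧ v x.2 < v x.1 := by
    intro x; simp [hS]
  have hA : ∀ x ∈ S', Φ x ∈ T := by
    intro x hx
    rw [memS'] at hx
    obtain ⟨hlt, hv⟩ := hx
    by_cases h : σ x.1 < σ x.2
    · simp only [hΦ]
      rw [if_pos h]
      apply Finset.mem_insert_of_mem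
      rw [memS]
      exact ⟨h, hv⟩
    · have hflip : σ x.2 < σ x.1 := by
        rcases lt_trichotomy (σ x.1) (σ x.2) with h' | h' | h'
        · exact absurd h' h
        · exact absurd (hinjσ h') (ne_of_lt hlt)
        · exact h'
      simp only [hΦ]
      rw [if_neg h]
      rcases hF x.1 x.2 hlt hflip with ⟨h1, h2⟩ | ⟨h1, h2, h3⟩ | ⟨h1, h2, h3⟩
      · rw [hT]
        have : x = (i, p) := Prod.ext h1 h2
        rw [this]; exact Finset.mem_insert_self _ _
      · -- x = (i, k) with i < k < p
        apply Finset.mem_insert_of_mem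
        rw [memS]
        refine ⟨hlt, ?_⟩
        rw [h1, hσi, hσo x.2 (ne_of_gt h2) (ne_of_lt h3)] at hv
        rw [h1]
        exact (hdi x.2 h2 h3).mpr hv
      · -- x = (k, p) with i < k < p
        apply Finset.mem_insert_of_mem
        rw [memS]
        refine ⟨hlt, ?_⟩
        rw [h1, hσp, hσo x.1 (ne_of_gt h2) (ne_of_lt h3)] at hv
        rw [h1]
        exact (hdi' x.1 h2 h3).mpr hv
  have hB : ∀ y ∈ T, Φ y ∈ S' := by
    intro y hy
    rw [hT, Finset.mem_insert] at hy
    rcases hy with hy | hy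
    · subst hy
      simp only [hΦ, hσi, hσp]
      rw [if_neg (asymm hip)]
      rw [memS']
      exact ⟨hip, by rw [hσi, hσp]; exact hvi⟩
    · rw [memS] at hy
      obtain ⟨hlt, hv⟩ := hy
      by_cases h : σ y.1 < σ y.2
      · simp only [hΦ]
        rw [if_pos h]
        rw [memS']
        exact ⟨h, by simp only [hσσ]; exact hv⟩
      · have hflip : σ y.2 < σ y.1 := by
          rcases lt_trichotomy (σ y.1) (σ y.2) with h' | h' | h'
          · exact absurd h' h
          · exact absurd (hinjσ h') (ne_of_lt hlt)
          · exact h'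
        simp only [hΦ]
        rw [if_neg h]
        rw [memS']
        refine ⟨hlt, ?_⟩
        rcases hF y.1 y.2 hlt hflip with ⟨h1, h2⟩ | ⟨h1, h2, h3⟩ | ⟨h1, h2, h3⟩
        · rw [h1, h2] at hv
          exact absurd (hv.trans hvi) (lt_irrefl _)
        · rw [h1, hσi, hσo y.2 (ne_of_gt h2) (ne_of_lt h3)]
          rw [h1] at hv
          exact (hdi y.2 h2 h3).mp hv
        · rw [h1, hσp, hσo y.1 (ne_of_gt h2) (ne_of_lt h3)]
          rw [h1] at hv
          exact (hdi' y.1 h2 h3).mp hv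
  have hcard : S'.card = T.card := by
    apply Finset.card_nbij' Φ Φ hA hB
    · intro x hx
      exact hΦΦ x ((memS' x).mp hx).1
    · intro y hy
      rw [hT, Finset.mem_coe, Finset.mem_insert] at hy
      rcases hy with hy | hy
      · subst hy; exact hΦΦ _ hip
      · exact hΦΦ y ((memS y).mp hy).1
  have : T.card = S.card + 1 := Finset.card_insert_of_notMem hipS
  show S'.card = S.card + 1
  rw [hcard, this]

theorem stmt_4 {n : ℕ} (w : Equiv.Perm (Fin n)) (p q : Fin n)
    (hp : ∃ i j : Fin n, i < p ∧ p < j ∧ w i < w j ∧ w j < w p)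
    (hpmax : ∀ t : Fin n, (∃ i j : Fin n, i < t ∧ t < j ∧ w i < w j ∧ w j < w t) → t ≤ p)
    (hq : p < q ∧ w q < w p ∧ ∃ i : Fin n, i < p ∧ w i < w q)
    (hqmax : ∀ j : Fin n, p < j → w j < w p → (∃ i : Fin n, i < p ∧ w i < w j) → j ≤ q)
    (u : Equiv.Perm (Fin n)) (hu : u = w * Equiv.swap p q) :
    ∃ i : Fin n, i < p ∧ numInv (u * Equiv.swap i p) = numInv u + 1 := by
  classical
  obtain ⟨hpq, hwqp, i₀, hi₀p, hi₀w⟩ := hq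
  -- u agrees with w below p, and u p = w q
  have hup : u p = w q := by
    rw [hu, Equiv.Perm.mul_apply, Equiv.swap_apply_left]
  have hub : ∀ x : Fin n, x < p → u x = w x := by
    intro x hx
    rw [hu, Equiv.Perm.mul_apply,
      Equiv.swap_apply_of_ne_of_ne (ne_of_lt hx) (ne_of_lt (hx.trans hpq))]
  -- choose i < p with w i < w q and w i maximal
  set T : Finset (Fin n) := Finset.univ.filter (fun x => x < p ∧ w x < w q) with hTdef
  have hTne : T.Nonempty := ⟨i₀, by simp [hTdef, hi₀p, hi₀w]⟩
  obtain ⟨i, hiT, himax⟩ := T.exists_max_image w hTne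
  have hiT' : i < p ∧ w i < w q := by simpa [hTdef] using hiT
  refine ⟨i, hiT'.1, ?_⟩
  apply key_numInv u i p hiT'.1
  · rw [hub i hiT'.1, hup]
    exact hiT'.2
  · intro k h1 h2 hcon
    rw [hub i hiT'.1, hub k h2, hup] at hcon
    have hkT : k ∈ T := by simp [hTdef, h2, hcon.2]
    have := himax k hkT
    exact absurd (lt_of_lt_of_le hcon.1 this) (lt_irrefl _)
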